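/- Let (X,μ,S,T) be an ergodic measure preserving system with commuting transformations S and T. Then the factor of X associated with the σ-algebra I_S ∨ I_T is isomorphic (as a measure preserving system) to a product of two ergodic systems: the map A ∩ B ↦ A × B (for A ∈ I_T, B ∈ I_S) induces a measure-preserving isomorphism between (X, I_T ∨ I_S, μ, S, T) and (X × X, I_T ⊗ I_S, μ ⊗ μ, S × id, id × T). -/

import Mathlib

open MeasureTheory

/-- The σ-algebra of `R`-invariant measurable sets. -/
def invSigma {X : Type*} [MeasurableSpace X] (R : X → X) : MeasurableSpace X where
  MeasurableSet' s := MeasurableSet s ∧ R ⁻¹' s = s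
  measurableSet_empty := ⟨MeasurableSet.empty, rfl⟩
  measurableSet_compl s hs := ⟨hs.1.compl, by rw [Set.preimage_compl, hs.2]⟩
  measurableSet_iUnion f hf := ⟨MeasurableSet.iUnion fun i => (hf i).1, by
    rw [Set.preimage_iUnion]; exact Set.iUnion_congr fun i => (hf i).2⟩

open Set ENNReal

section Aux
variable {X : Type*} [MeasurableSpace X]

lemma invSigma_le (R : X → X) : invSigma R ≤ ‹MeasurableSpace X› := fun _ hs => hs.1

/-- An a.e. T-invariant, strictly S-invariant measurable set has trivial measure. -/
lemma trivial_of_ae_invariant (μ : Measure X) [IsProbabilityMeasure μ]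
    (S T : X ≃ᵐ X) (hT : MeasurePreserving T μ μ)
    (hcomm : ∀ x, S (T x) = T (S x))
    (herg : ∀ s : Set X, MeasurableSet s → ⇑S ⁻¹' s = s → ⇑T ⁻¹' s = s → μ s = 0 ∨ μ s = 1)
    {E : Set X} (hEm : MeasurableSet E) (hES : ⇑S ⁻¹' E = E)
    (hET : ⇑T ⁻¹' E =ᵐ[μ] E) : μ E = 0 ∨ μ E = 1 := by
  have hcomm' : ∀ k : ℕ, ∀ x, S ((⇑T)^[k] x) = (⇑T)^[k] (S x) := by
    intro k
    induction k with
    | zero => intro x; simp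
    | succ k ih =>
      intro x
      rw [Function.iterate_succ_apply', Function.iterate_succ_apply', ← ih, hcomm]
  have hiter : ∀ k : ℕ, (⇑T)^[k] ⁻¹' E =ᵐ[μ] E := by
    intro k
    induction k with
    | zero => simp; exact Filter.EventuallyEq.rfl
    | succ k ih =>
      have h1 : (⇑T)^[k+1] ⁻¹' E = (⇑T)^[k] ⁻¹' (⇑T ⁻¹' E) := by
        rw [Function.iterate_succ']; rfl
      rw [h1]
      exact ((hT.iterate k).quasiMeasurePreserving.preimage_ae_eq hET).trans ih
  set G : ℕ → Set X := fun N => ⋃ n, (⇑T)^[n + N] ⁻¹' E with hG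
  have hGm : ∀ N, MeasurableSet (G N) :=
    fun N => MeasurableSet.iUnion fun n => (T.measurable.iterate _) hEm
  have hGae : ∀ N, G N =ᵐ[μ] E := by
    intro N
    have : G N =ᵐ[μ] ⋃ _n : ℕ, E :=
      EventuallyEq.countable_iUnion fun n => hiter (n + N)
    simpa [Set.iUnion_const, Set.iInter_const] using this
  set F : Set X := ⋂ N, G N with hF
  have hFm : MeasurableSet F := MeasurableSet.iInter hGm
  have hFae : F =ᵐ[μ] E := by
    have : F =ᵐ[μ] ⋂ _N : ℕ, E :=
      EventuallyEq.countable_iInter fun N => hGae N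
    simpa [Set.iUnion_const, Set.iInter_const] using this
  have hFS : ⇑S ⁻¹' F = F := by
    have : ∀ k : ℕ, ⇑S ⁻¹' ((⇑T)^[k] ⁻¹' E) = (⇑T)^[k] ⁻¹' E := by
      intro k
      have hc : (⇑T)^[k] ∘ ⇑S = ⇑S ∘ (⇑T)^[k] := funext fun x => (hcomm' k x).symm
      calc ⇑S ⁻¹' ((⇑T)^[k] ⁻¹' E) = ((⇑T)^[k] ∘ ⇑S) ⁻¹' E := rfl
        _ = (⇑S ∘ (⇑T)^[k]) ⁻¹' E := by rw [hc]
        _ = (⇑T)^[k] ⁻¹' (⇑S ⁻¹' E) := rfl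
        _ = (⇑T)^[k] ⁻¹' E := by rw [hES]
    simp only [hF, hG, preimage_iInter, preimage_iUnion]
    exact iInter_congr fun N => iUnion_congr fun n => this (n + N)
  have hTG : ∀ N, ⇑T ⁻¹' G N = G (N + 1) := by
    intro N
    simp only [hG, preimage_iUnion]
    refine iUnion_congr fun n => ?_
    have : (⇑T)^[n + N] ∘ ⇑T = (⇑T)^[n + (N + 1)] := by
      rw [← Function.iterate_succ]; congr 1
    calc ⇑T ⁻¹' ((⇑T)^[n + N] ⁻¹' E) = ((⇑T)^[n + N] ∘ ⇑T) ⁻¹' E := rfl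
      _ = (⇑T)^[n + (N + 1)] ⁻¹' E := by rw [this]
  have hGanti : ∀ N, G (N + 1) ⊆ G N := by
    intro N x hx
    rcases mem_iUnion.1 hx with ⟨n, hn⟩
    refine mem_iUnion.2 ⟨n + 1, ?_⟩
    have h2 : n + 1 + N = n + (N + 1) := by omega
    rw [h2]; exact hn
  have hFT : ⇑T ⁻¹' F = F := by
    have h1 : ⇑T ⁻¹' F = ⋂ N, G (N + 1) := by
      simp only [hF, preimage_iInter]
      exact iInter_congr hTG
    rw [h1]
    apply Set.Subset.antisymm
    · intro x hx
      refine mem_iInter.2 fun N => ?_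
      exact hGanti N (mem_iInter.1 hx N)
    · intro x hx
      exact mem_iInter.2 fun N => mem_iInter.1 hx (N + 1)
  have := herg F hFm hFS hFT
  rwa [measure_congr hFae] at this

end Aux

section Aux2
variable {X : Type*} [MeasurableSpace X]

lemma ae_const_of_invariant (μ : Measure X) [IsProbabilityMeasure μ]
    (S T : X ≃ᵐ X) (hT : MeasurePreserving T μ μ)
    (hcomm : ∀ x, S (T x) = T (S x))
    (herg : ∀ s : Set X, MeasurableSet s → ⇑S ⁻¹' s = s → ⇑T ⁻¹' s = s → μ s = 0 ∨ μ s = 1)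
    {h : X → ℝ} (hmeas : Measurable[invSigma ⇑S] h)
    (hT' : (fun x => h (T x)) =ᵐ[μ] h) :
    ∃ c : ℝ, h =ᵐ[μ] fun _ => c := by
  have hEr : ∀ r : ℝ, MeasurableSet {x | h x ≤ r} :=
    fun r => (hmeas measurableSet_Iic).1
  have key : ∀ r : ℝ, μ {x | h x ≤ r} = 0 ∨ μ {x | h x ≤ r} = 1 := by
    intro r
    have hEm' : MeasurableSet[invSigma ⇑S] {x | h x ≤ r} := hmeas measurableSet_Iic
    refine trivial_of_ae_invariant μ S T hT hcomm herg hEm'.1 hEm'.2 ?_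
    rw [Filter.eventuallyEq_set]
    filter_upwards [hT'] with x hx
    simp only [mem_preimage, mem_setOf_eq]
    change h (T x) ≤ r ↔ h x ≤ r
    rw [show h (T x) = h x from hx]
  set Φ : Set ℝ := {r : ℝ | μ {x | h x ≤ r} = 1} with hΦ
  have hne : Φ.Nonempty := by
    by_contra hcon
    rw [Set.not_nonempty_iff_eq_empty] at hcon
    have h0 : ∀ n : ℕ, μ {x | h x ≤ (n : ℝ)} = 0 := by
      intro n
      refine (key n).resolve_right fun h1 => ?_
      have : (n : ℝ) ∈ Φ := h1
      rw [hcon] at this; exact this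
    have hz : μ (⋃ n : ℕ, {x | h x ≤ (n : ℝ)}) = 0 := measure_iUnion_null h0
    have huniv : (⋃ n : ℕ, {x | h x ≤ (n : ℝ)}) = univ := by
      ext x
      simp only [mem_iUnion, mem_setOf_eq, mem_univ, iff_true]
      exact exists_nat_ge (h x)
    rw [huniv, measure_univ] at hz
    exact one_ne_zero hz
  have hbdd : BddBelow Φ := by
    obtain ⟨n₀, hn₀⟩ : ∃ n : ℕ, μ {x | h x ≤ -(n : ℝ)} = 0 := by
      by_contra hcon
      push_neg at hcon
      have h1 : ∀ n : ℕ, μ {x | h x ≤ -(n : ℝ)}ᶜ = 0 := by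
        intro n
        rw [prob_compl_eq_zero_iff (hEr _)]
        exact (key _).resolve_left (hcon n)
      have hz : μ (⋃ n : ℕ, {x | h x ≤ -(n : ℝ)}ᶜ) = 0 := measure_iUnion_null h1
      have huniv : (⋃ n : ℕ, {x | h x ≤ -(n : ℝ)}ᶜ) = univ := by
        ext x
        simp only [mem_iUnion, mem_compl_iff, mem_setOf_eq, mem_univ, iff_true, not_le]
        obtain ⟨n, hn⟩ := exists_nat_gt (-h x)
        exact ⟨n, by linarith⟩
      rw [huniv, measure_univ] at hz
      exact one_ne_zero hz
    refine ⟨-(n₀ : ℝ), fun r hr => ?_⟩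
    by_contra hlt
    push_neg at hlt
    have hle : μ {x | h x ≤ r} ≤ μ {x | h x ≤ -(n₀ : ℝ)} :=
      measure_mono fun x hx => le_trans hx hlt.le
    rw [hn₀] at hle
    rw [hΦ] at hr
    simp only [mem_setOf_eq] at hr
    rw [hr] at hle
    simp at hle
  set c : ℝ := sInf Φ with hc
  have hc1 : ∀ ε : ℝ, 0 < ε → μ {x | h x ≤ c + ε} = 1 := by
    intro ε hε
    obtain ⟨r, hrΦ, hrlt⟩ := (csInf_lt_iff hbdd hne).1 (lt_add_of_pos_right c hε)
    refine le_antisymm prob_le_one ?_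
    calc (1 : ℝ≥0∞) = μ {x | h x ≤ r} := hrΦ.symm
      _ ≤ μ {x | h x ≤ c + ε} := measure_mono fun x hx => le_trans hx hrlt.le
  have hlow : ∀ r : ℝ, r < c → μ {x | h x ≤ r} = 0 := by
    intro r hr
    refine (key r).resolve_right fun h1 => ?_
    exact absurd (csInf_le hbdd h1) (not_le.2 hr)
  have hlt0 : μ {x | h x < c} = 0 := by
    have hsub : {x | h x < c} ⊆ ⋃ n : ℕ, {x | h x ≤ c - 1 / (n + 1)} := by
      intro x hx
      obtain ⟨n, hn⟩ := exists_nat_one_div_lt (K := ℝ) (sub_pos.2 hx)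
      exact mem_iUnion.2 ⟨n, by simp only [mem_setOf_eq]; linarith⟩
    refine measure_mono_null hsub (measure_iUnion_null fun n => ?_)
    refine hlow _ ?_
    have : (0 : ℝ) < 1 / (n + 1) := by positivity
    linarith
  have hgt0 : μ {x | c < h x} = 0 := by
    have hseq : {x | h x ≤ c} = ⋂ n : ℕ, {x | h x ≤ c + 1 / (n + 1)} := by
      ext x
      simp only [mem_setOf_eq, mem_iInter]
      constructor
      · intro hx n
        have : (0 : ℝ) < 1 / (n + 1) := by positivity
        linarith
      · intro hx
        by_contra hcon
        push_neg at hcon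
        obtain ⟨n, hn⟩ := exists_nat_one_div_lt (K := ℝ) (sub_pos.2 hcon)
        have := hx n
        linarith
    have hcompl : μ {x | h x ≤ c}ᶜ = 0 := by
      rw [hseq, compl_iInter]
      refine measure_iUnion_null fun n => ?_
      rw [prob_compl_eq_zero_iff (hEr _)]
      exact hc1 _ (by positivity)
    have : {x | c < h x} = {x | h x ≤ c}ᶜ := by
      ext x; simp [not_le]
    rw [this]; exact hcompl
  refine ⟨c, ?_⟩
  rw [Filter.EventuallyEq, ae_iff]
  refine measure_mono_null (fun x hx => ?_) (measure_union_null hlt0 hgt0)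
  simp only [mem_setOf_eq] at hx ⊢
  rcases lt_or_gt_of_ne hx with h1 | h1
  · exact Or.inl h1
  · exact Or.inr h1

end Aux2

section Key
variable {X : Type*} [MeasurableSpace X]

lemma indep_key (μ : Measure X) [IsProbabilityMeasure μ]
    (S T : X ≃ᵐ X) (hS : MeasurePreserving S μ μ) (hT : MeasurePreserving T μ μ)
    (hcomm : ∀ x, S (T x) = T (S x))
    (herg : ∀ s : Set X, MeasurableSet s → ⇑S ⁻¹' s = s → ⇑T ⁻¹' s = s → μ s = 0 ∨ μ s = 1)
    {A B : Set X} (hA : MeasurableSet A) (hAT : ⇑T ⁻¹' A = A)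
    (hB : MeasurableSet B) (hBS : ⇑S ⁻¹' B = B) :
    μ (A ∩ B) = μ A * μ B := by
  classical
  have hm : invSigma ⇑S ≤ ‹MeasurableSpace X› := invSigma_le _
  set f : X → ℝ := A.indicator (fun _ => (1 : ℝ)) with hfdef
  have hf : Integrable f μ := (integrable_const 1).indicator hA
  set g : X → ℝ := μ[f| invSigma ⇑S] with hgdef
  have hgm : StronglyMeasurable[invSigma ⇑S] g := stronglyMeasurable_condExp
  have hint_f : ∀ u : Set X, MeasurableSet u → ∫ x in u, f x ∂μ = (μ (u ∩ A)).toReal := by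
    intro u hu
    rw [hfdef, setIntegral_indicator hA, setIntegral_const, smul_eq_mul, mul_one]; rfl
  -- T is m-measurable
  have hTm : @Measurable X X (invSigma ⇑S) (invSigma ⇑S) ⇑T := by
    intro s hs
    obtain ⟨hs1, hs2⟩ := hs
    refine ⟨T.measurable hs1, ?_⟩
    have hcom : ⇑S ⁻¹' (⇑T ⁻¹' s) = ⇑T ⁻¹' (⇑S ⁻¹' s) := by
      ext x
      simp only [mem_preimage]
      rw [hcomm x]
    rw [hcom, hs2]
  -- g is a.e. T-invariant
  have hgT : (fun x => g (T x)) =ᵐ[μ] g := by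
    refine ae_eq_condExp_of_forall_setIntegral_eq hm hf ?_ ?_ ?_
    · intro s _ _
      exact ((hT.integrable_comp_emb T.measurableEmbedding).2 integrable_condExp).integrableOn
    · intro s hs _
      obtain ⟨hs1, hs2⟩ := hs
      have hs1' : MeasurableSet (⇑T.symm ⁻¹' s) := T.symm.measurable hs1
      have hs2' : ⇑S ⁻¹' (⇑T.symm ⁻¹' s) = ⇑T.symm ⁻¹' s := by
        have hc : ∀ x, T.symm (S x) = S (T.symm x) := by
          intro x
          calc T.symm (S x) = T.symm (S (T (T.symm x))) := by rw [T.apply_symm_apply]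
            _ = T.symm (T (S (T.symm x))) := by rw [hcomm (T.symm x)]
            _ = S (T.symm x) := T.symm_apply_apply _
        have : ⇑S ⁻¹' (⇑T.symm ⁻¹' s) = ⇑T.symm ⁻¹' (⇑S ⁻¹' s) := by
          ext x
          simp only [mem_preimage]
          rw [hc x]
        rw [this, hs2]
      have hs' : MeasurableSet[invSigma ⇑S] (⇑T.symm ⁻¹' s) := ⟨hs1', hs2'⟩
      have hpre : ⇑T ⁻¹' (⇑T.symm ⁻¹' s) = s := by
        ext x; simp
      calc ∫ x in s, g (T x) ∂μ
          = ∫ x in ⇑T ⁻¹' (⇑T.symm ⁻¹' s), g (T x) ∂μ := by rw [hpre]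
        _ = ∫ y in ⇑T.symm ⁻¹' s, g y ∂μ :=
            hT.setIntegral_preimage_emb T.measurableEmbedding g _
        _ = ∫ y in ⇑T.symm ⁻¹' s, f y ∂μ := setIntegral_condExp hm hf hs'
        _ = (μ (⇑T.symm ⁻¹' s ∩ A)).toReal := hint_f _ hs1'
        _ = (μ (s ∩ A)).toReal := by
            rw [← hT.measure_preimage ((hs1'.inter hA).nullMeasurableSet)]
            congr 1
            rw [preimage_inter, hpre, hAT]
        _ = ∫ x in s, f x ∂μ := (hint_f _ hs1).symm
    · exact StronglyMeasurable.aestronglyMeasurable (hgm.comp_measurable hTm)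
  obtain ⟨c, hc⟩ := ae_const_of_invariant μ S T hT hcomm herg hgm.measurable hgT
  have hcval : c = (μ A).toReal := by
    have h1 : ∫ x, g x ∂μ = c := by
      rw [integral_congr_ae hc, integral_const]
      simp
    have h2 : ∫ x, g x ∂μ = ∫ x, f x ∂μ := integral_condExp hm
    have h3 : ∫ x, f x ∂μ = (μ A).toReal := by
      have := hint_f univ MeasurableSet.univ
      rw [univ_inter] at this
      simpa [Measure.restrict_univ] using this
    rw [← h1, h2, h3]
  have hBm : MeasurableSet[invSigma ⇑S] B := ⟨hB, hBS⟩
  have h2 : ∫ x in B, g x ∂μ = ∫ x in B, f x ∂μ := setIntegral_condExp hm hf hBm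
  have h3 : ∫ x in B, g x ∂μ = c * (μ B).toReal := by
    calc ∫ x in B, g x ∂μ = ∫ _x in B, c ∂μ := integral_congr_ae (ae_restrict_of_ae hc)
      _ = (μ B).toReal • c := setIntegral_const c
      _ = c * (μ B).toReal := by rw [smul_eq_mul, mul_comm]
  have hkey : (μ (A ∩ B)).toReal = (μ A).toReal * (μ B).toReal := by
    have h4 : (μ (B ∩ A)).toReal = c * (μ B).toReal := by
      rw [← hint_f B hB, ← h2, h3]
    rw [inter_comm, h4, hcval]
  have hfin1 : μ (A ∩ B) ≠ ⊤ := measure_ne_top _ _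
  have hfin2 : μ A * μ B ≠ ⊤ := ENNReal.mul_ne_top (measure_ne_top _ _) (measure_ne_top _ _)
  refine (ENNReal.toReal_eq_toReal_iff' hfin1 hfin2).1 ?_
  rw [ENNReal.toReal_mul]
  exact hkey

end Key

/-- the factor of an ergodic system `(X,μ,S,T)` associated with `I_T ∨ I_S`
is isomorphic to a product of two ergodic systems: the correspondence `A ∩ B ↦ A × B` is
realized at the level of points by the diagonal map `Δ x = (x,x)`, which identifies
`(X, I_T ∨ I_S, μ, S, T)` with `(X × X, I_T ⊗ I_S, μ ⊗ μ, S × id, id × T)` in a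
measure-preserving, equivariant way, and the two coordinate systems are ergodic. -/
theorem factor_isomorphic_to_product {X : Type*} [MeasurableSpace X]
    (μ : Measure X) [IsProbabilityMeasure μ]
    (S T : X ≃ᵐ X) (hS : MeasurePreserving S μ μ) (hT : MeasurePreserving T μ μ)
    (hcomm : ∀ x, S (T x) = T (S x))
    (herg : ∀ s : Set X, MeasurableSet s → ⇑S ⁻¹' s = s → ⇑T ⁻¹' s = s → μ s = 0 ∨ μ s = 1) :
    -- the set-level correspondence `C ↦ Δ⁻¹ C` is a bijection between
    -- `I_T ⊗ I_S` and `I_T ∨ I_S` (this encodes `A ∩ B ↦ A × B` on generators):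
    MeasurableSpace.comap (fun x : X => (x, x)) ((invSigma ⇑T).prod (invSigma ⇑S)) =
      invSigma ⇑T ⊔ invSigma ⇑S ∧
    -- it is measure preserving from `(X, I_T ∨ I_S, μ)` to `(X², I_T ⊗ I_S, μ ⊗ μ)`:
    (∀ C : Set (X × X), MeasurableSet[(invSigma ⇑T).prod (invSigma ⇑S)] C →
      μ ((fun x : X => (x, x)) ⁻¹' C) = μ.prod μ C) ∧
    -- it intertwines `S` with `S × id`:
    (∀ C : Set (X × X), MeasurableSet[(invSigma ⇑T).prod (invSigma ⇑S)] C →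
      (fun x : X => (x, x)) ⁻¹' (Prod.map ⇑S id ⁻¹' C) =
        ⇑S ⁻¹' ((fun x : X => (x, x)) ⁻¹' C)) ∧
    -- it intertwines `T` with `id × T`:
    (∀ C : Set (X × X), MeasurableSet[(invSigma ⇑T).prod (invSigma ⇑S)] C →
      (fun x : X => (x, x)) ⁻¹' (Prod.map id ⇑T ⁻¹' C) =
        ⇑T ⁻¹' ((fun x : X => (x, x)) ⁻¹' C)) ∧
    -- the two factor systems `(X, I_T, μ, S)` and `(X, I_S, μ, T)` are ergodic:
    (∀ A : Set X, MeasurableSet[invSigma ⇑T] A → ⇑S ⁻¹' A = A → μ A = 0 ∨ μ A = 1) ∧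
    (∀ B : Set X, MeasurableSet[invSigma ⇑S] B → ⇑T ⁻¹' B = B → μ B = 0 ∨ μ B = 1) := by
  classical
  -- the generating rectangles
  have hgen : (invSigma ⇑T).prod (invSigma ⇑S) =
      MeasurableSpace.generateFrom (Set.image2 (· ×ˢ ·)
        {s : Set X | MeasurableSet[invSigma ⇑T] s} {t : Set X | MeasurableSet[invSigma ⇑S] t}) := by
    have := generateFrom_prod_eq (α := X) (β := X)
      (C := {s : Set X | MeasurableSet[invSigma ⇑T] s})
      (D := {t : Set X | MeasurableSet[invSigma ⇑S] t})
      (@isCountablySpanning_measurableSet X (invSigma ⇑T))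
      (@isCountablySpanning_measurableSet X (invSigma ⇑S))
    rw [@MeasurableSpace.generateFrom_measurableSet X (invSigma ⇑T),
      @MeasurableSpace.generateFrom_measurableSet X (invSigma ⇑S)] at this
    exact this
  -- invariance of product-measurable sets
  have hinv : ∀ C : Set (X × X), MeasurableSet[(invSigma ⇑T).prod (invSigma ⇑S)] C →
      Prod.map ⇑T id ⁻¹' C = C ∧ Prod.map id ⇑S ⁻¹' C = C := by
    have hle1 : (invSigma ⇑T).prod (invSigma ⇑S) ≤ invSigma (Prod.map ⇑T id) := by
      rw [hgen]
      refine MeasurableSpace.generateFrom_le ?_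
      rintro _ ⟨A, hA, B, hB, rfl⟩
      refine ⟨hA.1.prod hB.1, ?_⟩
      ext ⟨a, b⟩
      simp only [mem_preimage, Prod.map_apply, id_eq, mem_prod]
      rw [show (T a ∈ A ↔ a ∈ A) from Set.ext_iff.1 hA.2 a]
    have hle2 : (invSigma ⇑T).prod (invSigma ⇑S) ≤ invSigma (Prod.map id ⇑S) := by
      rw [hgen]
      refine MeasurableSpace.generateFrom_le ?_
      rintro _ ⟨A, hA, B, hB, rfl⟩
      refine ⟨hA.1.prod hB.1, ?_⟩
      ext ⟨a, b⟩
      simp only [mem_preimage, Prod.map_apply, id_eq, mem_prod]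
      rw [show (S b ∈ B ↔ b ∈ B) from Set.ext_iff.1 hB.2 b]
    exact fun C hC => ⟨(hle1 C hC).2, (hle2 C hC).2⟩
  -- measure preservation
  have part2 : ∀ C : Set (X × X), MeasurableSet[(invSigma ⇑T).prod (invSigma ⇑S)] C →
      MeasurableSet C ∧ μ ((fun x : X => (x, x)) ⁻¹' C) = μ.prod μ C := by
    have hΔ : Measurable (fun x : X => (x, x)) := measurable_id.prodMk measurable_id
    intro C hC
    refine MeasurableSpace.induction_on_inter (m := (invSigma ⇑T).prod (invSigma ⇑S))
      (C := fun C _ => MeasurableSet C ∧ μ ((fun x : X => (x, x)) ⁻¹' C) = μ.prod μ C)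
      hgen ?_ ?_ ?_ ?_ ?_ C hC
    · rintro _ ⟨A, hA, B, hB, rfl⟩ _ ⟨A', hA', B', hB', rfl⟩ _
      exact ⟨A ∩ A', ⟨hA.1.inter hA'.1, by rw [preimage_inter, hA.2, hA'.2]⟩,
        B ∩ B', ⟨hB.1.inter hB'.1, by rw [preimage_inter, hB.2, hB'.2]⟩,
        (Set.prod_inter_prod).symm⟩
    · exact ⟨MeasurableSet.empty, by simp⟩
    · rintro _ ⟨A, hA, B, hB, rfl⟩
      refine ⟨hA.1.prod hB.1, ?_⟩
      have hpre : (fun x : X => (x, x)) ⁻¹' (A ×ˢ B) = A ∩ B := by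
        ext x; simp [Set.mem_prod]
      rw [hpre, Measure.prod_prod]
      exact indep_key μ S T hS hT hcomm herg hA.1 hA.2 hB.1 hB.2
    · rintro t _ ⟨ht1, ht2⟩
      refine ⟨ht1.compl, ?_⟩
      rw [preimage_compl, measure_compl (hΔ ht1) (measure_ne_top _ _),
        measure_compl ht1 (measure_ne_top _ _), measure_univ, measure_univ, ht2]
    · rintro f hdisj _ hP
      refine ⟨MeasurableSet.iUnion fun i => (hP i).1, ?_⟩
      rw [preimage_iUnion,
        measure_iUnion (fun i j hij => (hdisj hij).preimage _) (fun i => hΔ (hP i).1),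
        measure_iUnion hdisj fun i => (hP i).1]
      exact tsum_congr fun i => (hP i).2
  refine ⟨?_, fun C hC => (part2 C hC).2, ?_, ?_, ?_, ?_⟩
  · -- part 1
    show MeasurableSpace.comap _ ((invSigma ⇑T).comap Prod.fst ⊔ (invSigma ⇑S).comap Prod.snd) = _
    rw [MeasurableSpace.comap_sup, MeasurableSpace.comap_comp, MeasurableSpace.comap_comp]
    have h1 : (Prod.fst ∘ fun x : X => (x, x)) = id := rfl
    have h2 : (Prod.snd ∘ fun x : X => (x, x)) = id := rfl
    rw [h1, h2, MeasurableSpace.comap_id, MeasurableSpace.comap_id]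
  · -- intertwines S
    intro C hC
    have hCS := (hinv C hC).2
    ext x
    have h := Set.ext_iff.1 hCS (S x, x)
    simp only [mem_preimage, Prod.map_apply, id_eq] at h ⊢
    exact h.symm
  · -- intertwines T
    intro C hC
    have hCT := (hinv C hC).1
    ext x
    have h := Set.ext_iff.1 hCT (x, T x)
    simp only [mem_preimage, Prod.map_apply, id_eq] at h ⊢
    exact h.symm
  · exact fun A hA hAS => herg A hA.1 hAS hA.2
  · exact fun B hB hBT => herg B hB.1 hB.2 hBT
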